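/- arXiv:1905.09429 — 4 statements merged into one kernel-verified Lean document; each statement's English description precedes it below -/
import Mathlib

section
/- Let d ≥ 1 and let f, g ∈ ℂ[x,y] be polynomials of degree at most d whose coefficients — the (d+1)(d+2) complex numbers f_{ij}, g_{ij} for i+j ≤ d — are algebraically independent over ℚ. Then the set of common zeros {(a,b) ∈ ℂ² : f(a,b) = 0 and g(a,b) = 0} (the set of singular points of the vector field v = f ∂/∂x + g ∂/∂y) is finite and has exactly d² elements. -/
open Polynomial

namespace CardSing

variable {B : Type*} [CommRing B] {B' : Type*} [CommRing B']

/-- Generalized Sylvester-type matrix with column shift `s`.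
Row `inl i` (for `i < m`) carries the coefficients of `X^i * p`;
row `inr i` (for `i < n`) carries those of `X^i * q`.
Column `c` corresponds to the coefficient of degree `(finSumFinEquiv c : ℕ) + s`. -/
def syl (s n m : ℕ) (p q : B[X]) : Matrix (Fin m ⊕ Fin n) (Fin m ⊕ Fin n) B :=
  fun r c =>
    Sum.elim
      (fun i : Fin m => if (i : ℕ) ≤ (finSumFinEquiv c : ℕ) + s then
          p.coeff ((finSumFinEquiv c : ℕ) + s - i) else 0)
      (fun i : Fin n => if (i : ℕ) ≤ (finSumFinEquiv c : ℕ) + s then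
          q.coeff ((finSumFinEquiv c : ℕ) + s - i) else 0) r

lemma syl_map (φ : B →+* B') (s n m : ℕ) (p q : B[X]) :
    φ.mapMatrix (syl s n m p q) = syl s n m (p.map φ) (q.map φ) := by
  funext r c
  cases r <;>
    simp [syl, RingHom.mapMatrix_apply, Matrix.map_apply, apply_ite φ, coeff_map]

lemma det_syl_map (φ : B →+* B') (s n m : ℕ) (p q : B[X]) :
    φ ((syl s n m p q).det) = (syl s n m (p.map φ) (q.map φ)).det := by
  rw [RingHom.map_det, syl_map]

/-- The polynomial with coefficients `v 0, …, v (m-1)`. -/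
noncomputable def uOf (m : ℕ) (v : Fin m → B) : B[X] := ∑ i : Fin m, C (v i) * X ^ (i : ℕ)

lemma uOf_coeff (m : ℕ) (v : Fin m → B) (k : ℕ) :
    (uOf m v).coeff k = if h : k < m then v ⟨k, h⟩ else 0 := by
  rw [uOf, finset_sum_coeff]
  by_cases h : k < m
  · rw [dif_pos h]
    rw [Finset.sum_eq_single (⟨k, h⟩ : Fin m)]
    · simp
    · intro b _ hb
      have : (b : ℕ) ≠ k := by
        intro hc; apply hb; exact Fin.ext hc
      simp only [coeff_C_mul, coeff_X_pow, if_neg (Ne.symm this), mul_zero]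
    · simp
  · rw [dif_neg h]
    apply Finset.sum_eq_zero
    intro i _
    have : k ≠ (i:ℕ) := by omega
    simp only [coeff_C_mul, coeff_X_pow, if_neg this, mul_zero]

lemma uOf_eq (m : ℕ) (w : B[X]) (hw : ∀ k, m ≤ k → w.coeff k = 0) :
    uOf m (fun i => w.coeff i) = w := by
  ext k
  rw [uOf_coeff]
  by_cases h : k < m
  · rw [dif_pos h]
  · rw [dif_neg h, eq_comm]
    exact hw k (by omega)

lemma uOf_eq_zero_iff (m : ℕ) (v : Fin m → B) :
    uOf m v = 0 ↔ v = 0 := by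
  constructor
  · intro h
    funext i
    have := uOf_coeff m v i
    rw [h, coeff_zero] at this
    simpa [i.isLt] using this.symm
  · intro h; simp [uOf, h]

lemma uOf_mul_coeff (m : ℕ) (v : Fin m → B) (p : B[X]) (j : ℕ) :
    (uOf m v * p).coeff j
      = ∑ i : Fin m, v i * (if (i : ℕ) ≤ j then p.coeff (j - (i : ℕ)) else 0) := by
  rw [uOf, Finset.sum_mul, finset_sum_coeff]
  congr 1
  funext i
  have : C (v i) * X ^ (i : ℕ) * p = C (v i) * (p * X ^ (i : ℕ)) := by ring
  rw [this, coeff_C_mul, coeff_mul_X_pow']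

lemma uOf_mul_coeff_eq_zero (m np : ℕ) (v : Fin m → B) {p : B[X]}
    (hp : p.natDegree ≤ np) {k : ℕ} (hk : np + m ≤ k) :
    (uOf m v * p).coeff k = 0 := by
  rw [uOf_mul_coeff]
  apply Finset.sum_eq_zero
  intro i _
  have hi : (i : ℕ) < m := i.isLt
  by_cases h : (i : ℕ) ≤ k
  · rw [if_pos h, coeff_eq_zero_of_natDegree_lt (by omega), mul_zero]
  · rw [if_neg h, mul_zero]

lemma uOf_natDegree_lt (m : ℕ) (v : Fin m → B) (hm : 0 < m) :
    (uOf m v).natDegree < m := by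
  have := natDegree_le_iff_coeff_eq_zero (p := uOf m v) (n := m - 1)
  have h : (uOf m v).natDegree ≤ m - 1 := by
    rw [this]
    intro N hN
    rw [uOf_coeff, dif_neg (by omega)]
  omega

lemma vecMul_syl (s n m : ℕ) (p q : B[X]) (v : Fin m ⊕ Fin n → B) (c : Fin m ⊕ Fin n) :
    Matrix.vecMul v (syl s n m p q) c
      = (uOf m (v ∘ Sum.inl) * p + uOf n (v ∘ Sum.inr) * q).coeff
          ((finSumFinEquiv c : ℕ) + s) := by
  rw [coeff_add, uOf_mul_coeff, uOf_mul_coeff]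
  rw [Matrix.vecMul]
  show ∑ r : Fin m ⊕ Fin n, v r * syl s n m p q r c = _
  rw [Fintype.sum_sum_type]
  congr 1 <;> exact Finset.sum_congr rfl (fun i _ => by simp [syl])

/-- Every coefficient index `k` with `s ≤ k < n + m + s` is hit by some column. -/
lemma exists_col (s n m k : ℕ) (h1 : s ≤ k) (h2 : k < n + m + s) :
    ∃ c : Fin m ⊕ Fin n, (finSumFinEquiv c : ℕ) + s = k := by
  have hks : k - s < m + n := by omega
  refine ⟨finSumFinEquiv.symm ⟨k - s, hks⟩, ?_⟩
  have : (finSumFinEquiv (finSumFinEquiv.symm ⟨k - s, hks⟩) : ℕ) = k - s := by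
    rw [Equiv.apply_symm_apply]
  omega

section Criteria

variable {K : Type*} [Field K]

/-- If `h` of degree `≥ s+1` divides both `p` and `q`, the Sylvester determinant
with shift `s` vanishes. -/
lemma det_syl_eq_zero_of_dvd {s n m : ℕ} {p q h : K[X]}
    (hp : p.natDegree ≤ n + s) (hq : q.natDegree ≤ m + s) (hp0 : p ≠ 0)
    (hh : s + 1 ≤ h.natDegree) (hdp : h ∣ p) (hdq : h ∣ q) :
    (syl s n m p q).det = 0 := by
  obtain ⟨p₁, hp₁⟩ := hdp
  obtain ⟨q₁, hq₁⟩ := hdq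
  have hh0 : h ≠ 0 := by
    intro hc; rw [hc, zero_mul] at hp₁; exact hp0 hp₁
  have hp₁0 : p₁ ≠ 0 := by
    intro hc; rw [hc, mul_zero] at hp₁; exact hp0 hp₁
  have hdegp : p.natDegree = h.natDegree + p₁.natDegree := by
    rw [hp₁]; exact natDegree_mul hh0 hp₁0
  have hn : 1 ≤ n := by omega
  have hp₁deg : p₁.natDegree < n := by omega
  have hq₁deg : ∀ k, m ≤ k → q₁.coeff k = 0 := by
    intro k hk
    by_cases hq₁0 : q₁ = 0
    · simp [hq₁0]
    · have : q.natDegree = h.natDegree + q₁.natDegree := by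
        rw [hq₁]; exact natDegree_mul hh0 hq₁0
      exact coeff_eq_zero_of_natDegree_lt (by omega)
  set v : Fin m ⊕ Fin n → K :=
    Sum.elim (fun i : Fin m => q₁.coeff i) (fun i : Fin n => (-p₁).coeff i) with hv
  have hvuL : uOf m (v ∘ Sum.inl) = q₁ := by
    apply uOf_eq; intro k hk; exact hq₁deg k hk
  have hvuR : uOf n (v ∘ Sum.inr) = -p₁ := by
    apply uOf_eq; intro k hk
    show (-p₁).coeff k = 0
    rw [coeff_neg, coeff_eq_zero_of_natDegree_lt (by omega), neg_zero]
  have hker : Matrix.vecMul v (syl s n m p q) = 0 := by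
    funext c
    rw [vecMul_syl, hvuL, hvuR]
    have : q₁ * p + -p₁ * q = 0 := by rw [hp₁, hq₁]; ring
    rw [this, coeff_zero, Pi.zero_apply]
  have hv0 : v ≠ 0 := by
    intro hc
    apply hp₁0
    have : ∀ i : Fin n, p₁.coeff i = 0 := by
      intro i
      have := congrFun hc (Sum.inr i)
      simpa [hv] using this
    ext k
    by_cases hk : k < n
    · simpa using this ⟨k, hk⟩
    · rw [coeff_eq_zero_of_natDegree_lt (by omega), coeff_zero]
  exact Matrix.exists_vecMul_eq_zero_iff.mp ⟨v, hv0, hker⟩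

/-- Coprimality criterion: nonvanishing of the (shift 0) Sylvester determinant. -/
lemma det_syl_ne_zero {n m : ℕ} {p q : K[X]}
    (hp : p.natDegree ≤ n) (hpn : p.coeff n ≠ 0) (hq : q.natDegree ≤ m) (hq0 : q ≠ 0)
    (hco : IsCoprime p q) : (syl 0 n m p q).det ≠ 0 := by
  intro hdet
  obtain ⟨v, hv0, hker⟩ := Matrix.exists_vecMul_eq_zero_iff.mpr hdet
  set u := uOf m (v ∘ Sum.inl) with hu
  set w := uOf n (v ∘ Sum.inr) with hw
  have hnd : p.natDegree = n := le_antisymm hp (le_natDegree_of_ne_zero hpn)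
  have hp0 : p ≠ 0 := fun hc => hpn (by simp [hc])
  have hzero : u * p + w * q = 0 := by
    ext k
    rw [coeff_zero]
    by_cases hk : k < n + m
    · obtain ⟨c, hc⟩ := exists_col 0 n m k (Nat.zero_le _) (by omega)
      have := congrFun hker c
      rw [vecMul_syl, hc] at this
      simpa using this
    · rw [coeff_add, uOf_mul_coeff_eq_zero m n _ hp (by omega),
        uOf_mul_coeff_eq_zero n m _ hq (by omega), add_zero]
  have hdvd : p ∣ w * q := ⟨-u, by linear_combination hzero⟩
  have hpw : p ∣ w := hco.dvd_of_dvd_mul_right hdvd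
  have hw0 : w = 0 := by
    by_contra hc
    have hn : 0 < n := by
      rcases Nat.eq_zero_or_pos n with h0 | h0
      · exfalso; apply hc; subst h0; simp [hw, uOf]
      · exact h0
    have h1 : p.natDegree ≤ w.natDegree := natDegree_le_of_dvd hpw hc
    have h2 : w.natDegree < n := uOf_natDegree_lt n (v ∘ Sum.inr) hn
    omega
  have hu0 : u = 0 := by
    have : u * p = 0 := by rw [hw0, zero_mul, add_zero] at hzero; exact hzero
    rcases mul_eq_zero.mp this with h | h
    · exact h
    · exact absurd h hp0
  apply hv0
  have h1 := (uOf_eq_zero_iff m (v ∘ Sum.inl)).mp hu0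
  have h2 := (uOf_eq_zero_iff n (v ∘ Sum.inr)).mp hw0
  funext r
  cases r with
  | inl i => exact congrFun h1 i
  | inr i => exact congrFun h2 i

/-- From vanishing of the shift-1 determinant, extract `u, w` with
`u * p + w * q` constant. -/
lemma exists_of_det_syl1_eq_zero {n m : ℕ} {p q : K[X]}
    (hp : p.natDegree ≤ n + 1) (hq : q.natDegree ≤ m + 1)
    (hdet : (syl 1 n m p q).det = 0) :
    ∃ u w : K[X], ¬(u = 0 ∧ w = 0) ∧ u.natDegree < max m 1 ∧ w.natDegree < max n 1 ∧
      (m = 0 → u = 0) ∧ (n = 0 → w = 0) ∧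
      u * p + w * q = C ((u * p + w * q).coeff 0) := by
  obtain ⟨v, hv0, hker⟩ := Matrix.exists_vecMul_eq_zero_iff.mpr hdet
  refine ⟨uOf m (v ∘ Sum.inl), uOf n (v ∘ Sum.inr), ?_, ?_, ?_, ?_, ?_, ?_⟩
  · rintro ⟨h1, h2⟩
    apply hv0
    have h1 := (uOf_eq_zero_iff m _).mp h1
    have h2 := (uOf_eq_zero_iff n _).mp h2
    funext r
    cases r with
    | inl i => exact congrFun h1 i
    | inr i => exact congrFun h2 i
  · by_cases hm : 0 < m
    · exact lt_of_lt_of_le (uOf_natDegree_lt m _ hm) (le_max_left _ _)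
    · have : m = 0 := by omega
      subst this
      have : uOf 0 (v ∘ Sum.inl) = 0 := by simp [uOf]
      rw [this]; simpa using Nat.one_pos
  · by_cases hn : 0 < n
    · exact lt_of_lt_of_le (uOf_natDegree_lt n _ hn) (le_max_left _ _)
    · have : n = 0 := by omega
      subst this
      have : uOf 0 (v ∘ Sum.inr) = 0 := by simp [uOf]
      rw [this]; simpa using Nat.one_pos
  · intro hm; subst hm; simp [uOf]
  · intro hn; subst hn; simp [uOf]
  · ext k
    rcases Nat.eq_zero_or_pos k with hk | hk
    · subst hk; simp
    rw [coeff_C, if_neg (by omega)]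
    by_cases hk2 : k < n + m + 1
    · obtain ⟨c, hc⟩ := exists_col 1 n m k hk (by omega)
      have := congrFun hker c
      rw [vecMul_syl, hc] at this
      simpa using this
    · rw [coeff_add, uOf_mul_coeff_eq_zero m (n+1) _ hp (by omega),
        uOf_mul_coeff_eq_zero n (m+1) _ hq (by omega), add_zero]

end Criteria

section DetDegree

variable {B : Type*} [CommRing B]

lemma natDegree_det_le {ι : Type*} [Fintype ι] [DecidableEq ι]
    (A : Matrix ι ι (B[X])) (b : ι → ℕ)
    (h : ∀ r c, (A r c).natDegree ≤ b r) :
    A.det.natDegree ≤ ∑ r, b r := by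
  rw [Matrix.det_apply]
  apply natDegree_sum_le_of_forall_le
  intro σ _
  have hbound : (∏ i, A (σ i) i).natDegree ≤ ∑ r, b r := by
    refine le_trans (natDegree_prod_le Finset.univ (fun i => A (σ i) i)) ?_
    calc ∑ i, (A (σ i) i).natDegree ≤ ∑ i, b (σ i) :=
          Finset.sum_le_sum (fun i _ => h (σ i) i)
      _ = ∑ r, b r := Equiv.sum_comp σ b
  rcases Int.units_eq_one_or (Equiv.Perm.sign σ) with hs | hs <;> rw [hs]
  · rw [one_smul]; exact hbound
  · have : (-1 : ℤˣ) • ∏ i, A (σ i) i = -∏ i, A (σ i) i := by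
      rw [Units.smul_def]; push_cast; rw [neg_smul, one_smul]
    rw [this, natDegree_neg]; exact hbound

end DetDegree

section Generic

variable {B : Type*} [CommRing B] {B' : Type*} [CommRing B']

def Tset (d : ℕ) : Finset (ℕ × ℕ) :=
  (Finset.range (d+1) ×ˢ Finset.range (d+1)).filter fun ij => ij.1 + ij.2 ≤ d

lemma mem_Tset {d : ℕ} {ij : ℕ × ℕ} : ij ∈ Tset d ↔ ij.1 + ij.2 ≤ d := by
  simp only [Tset, Finset.mem_filter, Finset.mem_product, Finset.mem_range]
  omega

/-- The bivariate polynomial with coefficient function `c`, as an element of `B[x][y]`. -/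
noncomputable def P (d : ℕ) (c : ℕ × ℕ → B) : Polynomial (B[X]) :=
  ∑ ij ∈ Tset d, Polynomial.C (Polynomial.C (c ij) * Polynomial.X ^ ij.1) * Polynomial.X ^ ij.2

lemma coeff_P (d : ℕ) (c : ℕ × ℕ → B) (k : ℕ) :
    (P d c).coeff k
      = ∑ ij ∈ Tset d, (if ij.2 = k then Polynomial.C (c ij) * Polynomial.X ^ ij.1 else 0) := by
  rw [P, finset_sum_coeff]
  refine Finset.sum_congr rfl (fun ij _ => ?_)
  rw [coeff_C_mul, coeff_X_pow]
  by_cases h : ij.2 = k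
  · rw [if_pos h, if_pos h.symm, mul_one]
  · rw [if_neg h, if_neg (Ne.symm h), mul_zero]

lemma natDegree_coeff_P (d : ℕ) (c : ℕ × ℕ → B) (k : ℕ) :
    ((P d c).coeff k).natDegree ≤ d - k := by
  rw [coeff_P]
  apply natDegree_sum_le_of_forall_le
  intro ij hij
  by_cases h : ij.2 = k
  · rw [if_pos h]
    refine le_trans natDegree_mul_le ?_
    have := mem_Tset.mp hij
    have h2 := natDegree_X_pow_le (R := B) ij.1
    have h3 : (Polynomial.C (c ij)).natDegree = 0 := natDegree_C _
    omega
  · rw [if_neg h]; simp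

lemma coeff_P_eq_zero (d : ℕ) (c : ℕ × ℕ → B) {k : ℕ} (hk : d < k) :
    (P d c).coeff k = 0 := by
  rw [coeff_P]
  apply Finset.sum_eq_zero
  intro ij hij
  have := mem_Tset.mp hij
  rw [if_neg (by omega)]

lemma natDegree_P_le (d : ℕ) (c : ℕ × ℕ → B) : (P d c).natDegree ≤ d :=
  natDegree_le_iff_coeff_eq_zero.mpr fun _ hN => coeff_P_eq_zero d c hN

lemma coeff_P_top (d : ℕ) (c : ℕ × ℕ → B) :
    (P d c).coeff d = Polynomial.C (c (0, d)) := by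
  rw [coeff_P]
  rw [Finset.sum_eq_single ((0 : ℕ), d)]
  · simp
  · intro ij hij hne
    have := mem_Tset.mp hij
    rw [if_neg]
    intro hc
    exact hne (by ext <;> simp <;> omega)
  · intro h
    exact absurd (mem_Tset.mpr (by simp)) h

lemma map_P (φ : B →+* B') (d : ℕ) (c : ℕ × ℕ → B) :
    (P d c).map (Polynomial.mapRingHom φ) = P d (fun ij => φ (c ij)) := by
  rw [P, Polynomial.map_sum, P]
  refine Finset.sum_congr rfl (fun ij _ => ?_)
  simp

/-- Specialization of `P` at `x = a`. -/
noncomputable def Pq (d : ℕ) (a : B) (c : ℕ × ℕ → B) : B[X] :=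
  ∑ ij ∈ Tset d, Polynomial.C (c ij * a ^ ij.1) * Polynomial.X ^ ij.2

lemma map_eval_P (d : ℕ) (a : B) (c : ℕ × ℕ → B) :
    (P d c).map (evalRingHom a) = Pq d a c := by
  rw [P, Polynomial.map_sum, Pq]
  refine Finset.sum_congr rfl (fun ij _ => ?_)
  simp

lemma coeff_Pq (d : ℕ) (a : B) (c : ℕ × ℕ → B) (k : ℕ) :
    (Pq d a c).coeff k = ∑ ij ∈ Tset d, (if ij.2 = k then c ij * a ^ ij.1 else 0) := by
  rw [Pq, finset_sum_coeff]
  refine Finset.sum_congr rfl (fun ij _ => ?_)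
  rw [coeff_C_mul, coeff_X_pow]
  by_cases h : ij.2 = k
  · rw [if_pos h, if_pos h.symm, mul_one]
  · rw [if_neg h, if_neg (Ne.symm h), mul_zero]

lemma coeff_Pq_top (d : ℕ) (a : B) (c : ℕ × ℕ → B) :
    (Pq d a c).coeff d = c (0, d) := by
  rw [coeff_Pq]
  rw [Finset.sum_eq_single ((0 : ℕ), d)]
  · simp
  · intro ij hij hne
    have := mem_Tset.mp hij
    rw [if_neg]
    intro hc
    exact hne (by ext <;> simp <;> omega)
  · intro h
    exact absurd (mem_Tset.mpr (by simp)) h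

lemma natDegree_Pq_le (d : ℕ) (a : B) (c : ℕ × ℕ → B) : (Pq d a c).natDegree ≤ d := by
  apply natDegree_le_iff_coeff_eq_zero.mpr
  intro N hN
  rw [coeff_Pq]
  apply Finset.sum_eq_zero
  intro ij hij
  have := mem_Tset.mp hij
  rw [if_neg (by omega)]

lemma eval_Pq (d : ℕ) (a b : B) (c : ℕ × ℕ → B) :
    (Pq d a c).eval b = ∑ ij ∈ Tset d, c ij * a ^ ij.1 * b ^ ij.2 := by
  rw [Pq, eval_finset_sum]
  refine Finset.sum_congr rfl (fun ij _ => ?_)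
  simp

/-- The resultant-in-`y` of the generic pair, an element of `B[x]`. -/
noncomputable def Rp (d : ℕ) (cf cg : ℕ × ℕ → B) : B[X] :=
  (syl 0 d d (P d cf) (P d cg)).det

/-- The first subresultant-type determinant. -/
noncomputable def S1p (d : ℕ) (cf cg : ℕ × ℕ → B) : B[X] :=
  (syl 1 (d-1) (d-1) (P d cf) (P d cg)).det

noncomputable def D2 (d : ℕ) (cf cg : ℕ × ℕ → B) : B := (Rp d cf cg).coeff (d^2)

noncomputable def D3 (d : ℕ) (cf cg : ℕ × ℕ → B) : B :=
  (syl 0 (d^2) (d^2 - 1) (Rp d cf cg) (derivative (Rp d cf cg))).det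

noncomputable def D4 (d : ℕ) (cf cg : ℕ × ℕ → B) : B :=
  (syl 0 (d^2) (2*(d-1)*d) (Rp d cf cg) (S1p d cf cg)).det

lemma map_Rp (φ : B →+* B') (d : ℕ) (cf cg : ℕ × ℕ → B) :
    (Rp d cf cg).map φ = Rp d (fun ij => φ (cf ij)) (fun ij => φ (cg ij)) := by
  show Polynomial.mapRingHom φ (Rp d cf cg) = _
  rw [Rp, det_syl_map, map_P, map_P, Rp]

lemma map_S1p (φ : B →+* B') (d : ℕ) (cf cg : ℕ × ℕ → B) :
    (S1p d cf cg).map φ = S1p d (fun ij => φ (cf ij)) (fun ij => φ (cg ij)) := by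
  show Polynomial.mapRingHom φ (S1p d cf cg) = _
  rw [S1p, det_syl_map, map_P, map_P, S1p]

lemma map_D2 (φ : B →+* B') (d : ℕ) (cf cg : ℕ × ℕ → B) :
    φ (D2 d cf cg) = D2 d (fun ij => φ (cf ij)) (fun ij => φ (cg ij)) := by
  rw [D2, ← coeff_map, map_Rp, D2]

lemma map_D3 (φ : B →+* B') (d : ℕ) (cf cg : ℕ × ℕ → B) :
    φ (D3 d cf cg) = D3 d (fun ij => φ (cf ij)) (fun ij => φ (cg ij)) := by
  rw [D3, det_syl_map, map_Rp, ← derivative_map, map_Rp, D3]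

lemma map_D4 (φ : B →+* B') (d : ℕ) (cf cg : ℕ × ℕ → B) :
    φ (D4 d cf cg) = D4 d (fun ij => φ (cf ij)) (fun ij => φ (cg ij)) := by
  rw [D4, det_syl_map, map_Rp, map_S1p, D4]

lemma eval_Rp (d : ℕ) (a : B) (cf cg : ℕ × ℕ → B) :
    (Rp d cf cg).eval a = (syl 0 d d (Pq d a cf) (Pq d a cg)).det := by
  show evalRingHom a (Rp d cf cg) = _
  rw [Rp, det_syl_map, map_eval_P, map_eval_P]

lemma eval_S1p (d : ℕ) (a : B) (cf cg : ℕ × ℕ → B) :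
    (S1p d cf cg).eval a = (syl 1 (d-1) (d-1) (Pq d a cf) (Pq d a cg)).det := by
  show evalRingHom a (S1p d cf cg) = _
  rw [S1p, det_syl_map, map_eval_P, map_eval_P]

end Generic

section DegreeBounds

variable {K : Type*} [Field K]

lemma natDegree_Rp_le (d : ℕ) (cf cg : ℕ × ℕ → K) :
    (Rp d cf cg).natDegree ≤ d ^ 2 := by
  classical
  set A := syl 0 d d (P d cf) (P d cg) with hA
  set Dg : Matrix (Fin d ⊕ Fin d) (Fin d ⊕ Fin d) (K[X]) :=
    Matrix.diagonal (fun c => Polynomial.X ^ (finSumFinEquiv c : ℕ)) with hDg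
  set E : ℕ := ∑ c : Fin d ⊕ Fin d, (finSumFinEquiv c : ℕ) with hE
  have hdet : (A * Dg).det = A.det * Polynomial.X ^ E := by
    rw [Matrix.det_mul, hDg, Matrix.det_diagonal, Finset.prod_pow_eq_pow_sum]
  have hent : ∀ r c, ((A * Dg) r c).natDegree ≤ d + (Sum.elim Fin.val Fin.val r) := by
    intro r c
    rw [hDg, Matrix.mul_diagonal]
    set j := (finSumFinEquiv c : ℕ) with hj
    have hcoeff : ∀ (cc : ℕ × ℕ → K) (i : ℕ), i ≤ j →
        (((P d cc).coeff (j - i)) * Polynomial.X ^ j).natDegree ≤ d + i := by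
      intro cc i hij
      by_cases hbig : d < j - i
      · rw [coeff_P_eq_zero d cc hbig, zero_mul]
        simp
      · refine le_trans natDegree_mul_le ?_
        have h1 := natDegree_coeff_P d cc (j - i)
        have h2 := natDegree_X_pow_le (R := K) j
        omega
    cases r with
    | inl i =>
        by_cases hij : (i : ℕ) ≤ j
        · have : A (Sum.inl i) c = (P d cf).coeff (j - i) := by
            rw [hA]; simp [syl, hij, hj]; intro h; exfalso; omega
          rw [this]
          simpa using hcoeff cf i hij
        · have : A (Sum.inl i) c = 0 := by rw [hA]; simp [syl, hij, hj]; intro h; exfalso; omega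
          rw [this, zero_mul]; simp
    | inr i =>
        by_cases hij : (i : ℕ) ≤ j
        · have : A (Sum.inr i) c = (P d cg).coeff (j - i) := by
            rw [hA]; simp [syl, hij, hj]; intro h; exfalso; omega
          rw [this]
          simpa using hcoeff cg i hij
        · have : A (Sum.inr i) c = 0 := by rw [hA]; simp [syl, hij, hj]; intro h; exfalso; omega
          rw [this, zero_mul]; simp
  have hdetle := natDegree_det_le (A * Dg) (fun r => d + Sum.elim Fin.val Fin.val r) hent
  rw [hdet] at hdetle
  set s : ℕ := ∑ i : Fin d, (i : ℕ) with hs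
  have hsum1 : ∑ r : Fin d ⊕ Fin d, (d + Sum.elim Fin.val Fin.val r) = 2 * (d * d) + 2 * s := by
    rw [Fintype.sum_sum_type]
    simp only [Sum.elim_inl, Sum.elim_inr, Finset.sum_add_distrib, Finset.sum_const,
      Finset.card_univ, Fintype.card_fin, smul_eq_mul]
    rw [hs]; ring
  have hsum2 : E = s + (d * d + s) := by
    have hL : ∑ i : Fin d, ((finSumFinEquiv (Sum.inl i : Fin d ⊕ Fin d)) : ℕ) = s :=
      (Finset.sum_congr rfl fun i _ => by simp).trans hs.symm
    have hR : ∑ i : Fin d, ((finSumFinEquiv (Sum.inr i : Fin d ⊕ Fin d)) : ℕ) = d * d + s := by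
      have hx : ∀ i : Fin d, ((finSumFinEquiv (Sum.inr i : Fin d ⊕ Fin d)) : ℕ) = d + (i : ℕ) := fun i => by
        simp [Nat.add_comm]
      rw [Finset.sum_congr rfl (fun i _ => hx i), Finset.sum_add_distrib, Finset.sum_const,
        Finset.card_univ, Fintype.card_fin, smul_eq_mul, hs]
    rw [hE, Fintype.sum_sum_type, hL, hR]
  by_cases hz : A.det = 0
  · rw [Rp, ← hA, hz]; simp
  · have : (A.det * Polynomial.X ^ E).natDegree = A.det.natDegree + E := by
      rw [natDegree_mul hz (pow_ne_zero _ Polynomial.X_ne_zero), natDegree_X_pow]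
    rw [this, hsum1, hsum2] at hdetle
    rw [Rp, ← hA]
    have : d ^ 2 = d * d := by ring
    omega

lemma natDegree_S1p_le (d : ℕ) (cf cg : ℕ × ℕ → K) :
    (S1p d cf cg).natDegree ≤ 2 * (d - 1) * d := by
  rw [S1p]
  refine le_trans (natDegree_det_le _ (fun _ => d) ?_) ?_
  · intro r c
    cases r with
    | inl i =>
        simp only [syl, Sum.elim_inl]
        split
        · exact le_trans (natDegree_coeff_P d cf _) (by omega)
        · simp
    | inr i =>
        simp only [syl, Sum.elim_inr]
        split
        · exact le_trans (natDegree_coeff_P d cg _) (by omega)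
        · simp
  · rw [Finset.sum_const, Finset.card_univ]
    simp only [Fintype.card_sum, Fintype.card_fin, smul_eq_mul]
    have h : d - 1 + (d - 1) = 2 * (d - 1) := by omega
    rw [h]

end DegreeBounds

section CLevel

lemma Pq_ne_zero {d : ℕ} {a : ℂ} {c : ℕ × ℕ → ℂ} (h : c (0, d) ≠ 0) : Pq d a c ≠ 0 :=
  fun hc => h (by rw [← coeff_Pq_top d a c, hc, coeff_zero])

lemma coeff_Pq_top_ne {d : ℕ} {a : ℂ} {c : ℕ × ℕ → ℂ} (h : c (0, d) ≠ 0) :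
    (Pq d a c).coeff d ≠ 0 := by rw [coeff_Pq_top]; exact h

/-- If the resultant vanishes at `a`, there is a common root above `a`. -/
lemma exists_common_root {d : ℕ} {cf cg : ℕ × ℕ → ℂ} (hf : cf (0, d) ≠ 0)
    (hg : cg (0, d) ≠ 0) {a : ℂ} (ha : (Rp d cf cg).eval a = 0) :
    ∃ b : ℂ, (Pq d a cf).eval b = 0 ∧ (Pq d a cg).eval b = 0 := by
  rw [eval_Rp] at ha
  by_contra hno
  push_neg at hno
  classical
  have hq0 : Pq d a cg ≠ 0 := Pq_ne_zero hg
  have hco : IsCoprime (Pq d a cf) (Pq d a cg) := by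
    rw [← EuclideanDomain.gcd_isUnit_iff]
    by_contra hunit
    set G := EuclideanDomain.gcd (Pq d a cf) (Pq d a cg) with hG
    have hgcd0 : G ≠ 0 := by
      intro hc
      exact Pq_ne_zero hf (EuclideanDomain.gcd_eq_zero_iff.mp hc).1
    have hdeg : G.degree ≠ 0 := by
      intro hc
      exact hunit (Polynomial.isUnit_iff_degree_eq_zero.mpr hc)
    obtain ⟨b, hb⟩ := IsAlgClosed.exists_root G hdeg
    have h1 : (Pq d a cf).eval b = 0 :=
      eval_eq_zero_of_dvd_of_eval_eq_zero (EuclideanDomain.gcd_dvd_left _ _) hb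
    have h2 : (Pq d a cg).eval b = 0 :=
      eval_eq_zero_of_dvd_of_eval_eq_zero (EuclideanDomain.gcd_dvd_right _ _) hb
    exact hno b h1 h2
  exact det_syl_ne_zero (natDegree_Pq_le d a cf) (coeff_Pq_top_ne hf)
    (natDegree_Pq_le d a cg) hq0 hco ha

/-- A common root above `a` forces the resultant to vanish at `a`. -/
lemma Rp_eval_eq_zero {d : ℕ} {cf cg : ℕ × ℕ → ℂ} (hf : cf (0, d) ≠ 0)
    {a b : ℂ} (h1 : (Pq d a cf).eval b = 0) (h2 : (Pq d a cg).eval b = 0) :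
    (Rp d cf cg).eval a = 0 := by
  rw [eval_Rp]
  refine det_syl_eq_zero_of_dvd (h := Polynomial.X - Polynomial.C b)
    (by simpa using natDegree_Pq_le d a cf) (by simpa using natDegree_Pq_le d a cg)
    (Pq_ne_zero hf) (by simp) (dvd_iff_isRoot.mpr h1) (dvd_iff_isRoot.mpr h2)

/-- Two distinct common roots above `a` force the subresultant to vanish at `a`. -/
lemma S1p_eval_eq_zero {d : ℕ} (hd : 1 ≤ d) {cf cg : ℕ × ℕ → ℂ} (hf : cf (0, d) ≠ 0)
    {a b₁ b₂ : ℂ} (hb : b₁ ≠ b₂)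
    (h1 : (Pq d a cf).eval b₁ = 0) (h2 : (Pq d a cg).eval b₁ = 0)
    (h3 : (Pq d a cf).eval b₂ = 0) (h4 : (Pq d a cg).eval b₂ = 0) :
    (S1p d cf cg).eval a = 0 := by
  rw [eval_S1p]
  have hdvd : ∀ p : ℂ[X], p.eval b₁ = 0 → p.eval b₂ = 0 →
      (Polynomial.X - Polynomial.C b₁) * (Polynomial.X - Polynomial.C b₂) ∣ p := by
    intro p e1 e2
    have c : IsCoprime (Polynomial.X - Polynomial.C b₁) (Polynomial.X - Polynomial.C b₂) :=
      isCoprime_X_sub_C_of_isUnit_sub (by simpa using sub_ne_zero.mpr hb)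
    exact c.mul_dvd (dvd_iff_isRoot.mpr e1) (dvd_iff_isRoot.mpr e2)
  have hnd : ((Polynomial.X - Polynomial.C b₁) * (Polynomial.X - Polynomial.C b₂)).natDegree
      = 2 := by
    rw [natDegree_mul (X_sub_C_ne_zero b₁) (X_sub_C_ne_zero b₂)]
    simp [natDegree_X_sub_C]
  refine det_syl_eq_zero_of_dvd (s := 1)
    (h := (Polynomial.X - Polynomial.C b₁) * (Polynomial.X - Polynomial.C b₂))
    ?_ ?_ (Pq_ne_zero hf) (by omega) (hdvd _ h1 h3) (hdvd _ h2 h4)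
  · have := natDegree_Pq_le d a cf; omega
  · have := natDegree_Pq_le d a cg; omega

end CLevel

section Witness

variable (d : ℕ)

/-- Witness coefficients of `f₀ = y^d - 2 x^d`. -/
noncomputable def cwf : ℕ × ℕ → ℂ := fun ij =>
  if ij = (0, d) then 1 else if ij = (d, 0) then -2 else 0

/-- Witness coefficients of `g₀ = x^(d-1) y - 1`. -/
noncomputable def cwg : ℕ × ℕ → ℂ := fun ij =>
  if ij = (d - 1, 1) then 1 else if ij = (0, 0) then -1 else 0

lemma sum_pair_Tset {M : Type*} [AddCommMonoid M] {A B : ℕ × ℕ}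
    (hA : A ∈ Tset d) (hB : B ∈ Tset d) (hAB : A ≠ B) (F : ℕ × ℕ → M)
    (hF : ∀ ij, ij ≠ A → ij ≠ B → F ij = 0) :
    ∑ ij ∈ Tset d, F ij = F A + F B := by
  rw [← Finset.sum_pair hAB]
  apply (Finset.sum_subset ?_ ?_).symm
  · intro x hx
    rcases Finset.mem_insert.mp hx with h | h
    · subst h; exact hA
    · rw [Finset.mem_singleton.mp h]; exact hB
  · intro x _ hx
    apply hF
    · intro hc; subst hc; exact hx (Finset.mem_insert_self _ _)
    · intro hc; subst hc; exact hx (Finset.mem_insert_of_mem (Finset.mem_singleton_self _))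

variable {d}

lemma Pq_cwf (hd : 1 ≤ d) (a : ℂ) :
    Pq d a (cwf d) = Polynomial.X ^ d - Polynomial.C (2 * a ^ d) := by
  rw [Pq]
  rw [sum_pair_Tset d (A := (0, d)) (B := (d, 0)) (mem_Tset.mpr (by simp))
    (mem_Tset.mpr (by simp)) (by intro hc; rw [Prod.mk.injEq] at hc; omega) _ ?_]
  · have e1 : cwf d (0, d) = 1 := if_pos rfl
    have e2 : cwf d (d, 0) = -2 := by
      have hne : ((d, 0) : ℕ × ℕ) ≠ (0, d) := by
        intro hc; rw [Prod.mk.injEq] at hc; omega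
      simp only [cwf, if_neg hne]
      norm_num
    rw [e1, e2]
    simp only [pow_zero, one_mul, mul_one, Polynomial.C_1]
    rw [show (-2 : ℂ) * a ^ d = -(2 * a ^ d) by ring, map_neg, sub_eq_add_neg]
  · intro ij h1 h2
    rw [cwf, if_neg h1, if_neg h2, zero_mul, map_zero, zero_mul]

lemma Pq_cwg (hd : 1 ≤ d) (a : ℂ) :
    Pq d a (cwg d) = Polynomial.C (a ^ (d - 1)) * Polynomial.X - Polynomial.C 1 := by
  rw [Pq]
  rw [sum_pair_Tset d (A := (d - 1, 1)) (B := (0, 0)) (mem_Tset.mpr (by omega))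
    (mem_Tset.mpr (by simp)) (by intro hc; rw [Prod.mk.injEq] at hc; omega) _ ?_]
  · have e1 : cwg d (d - 1, 1) = 1 := if_pos rfl
    have e2 : cwg d (0, 0) = -1 := by
      have hne : ((0, 0) : ℕ × ℕ) ≠ (d - 1, 1) := by
        intro hc; rw [Prod.mk.injEq] at hc; omega
      simp only [cwg, if_neg hne]
      norm_num
    rw [e1, e2]
    simp only [pow_zero, one_mul, mul_one, pow_one, Polynomial.C_1]
    rw [show Polynomial.C (-1 : ℂ) = -(1 : ℂ[X]) by simp, sub_eq_add_neg]
  · intro ij h1 h2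
    rw [cwg, if_neg h1, if_neg h2, zero_mul, map_zero, zero_mul]

/-- The witness "resultant target" `2 X^{d²} - 1`. -/
noncomputable def Tw : Polynomial ℂ := Polynomial.C 2 * Polynomial.X ^ (d ^ 2) - Polynomial.C 1

lemma natDegree_Tw (hd : 1 ≤ d) : (Tw (d := d)).natDegree = d ^ 2 := by
  rw [Tw, natDegree_sub_C, natDegree_C_mul_X_pow _ _ (two_ne_zero)]

lemma Tw_ne_zero (hd : 1 ≤ d) : (Tw (d := d)) ≠ 0 := by
  intro hc
  have h1 := natDegree_Tw hd
  rw [hc, natDegree_zero] at h1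
  have h2 : 1 ≤ d ^ 2 := Nat.one_le_pow 2 d (by omega)
  omega

lemma separable_Tw (hd : 1 ≤ d) : (Tw (d := d)).Separable := by
  have hN1 : 1 ≤ d ^ 2 := Nat.one_le_pow 2 d (by omega)
  have hN0 : ((d ^ 2 : ℕ) : ℂ) ≠ 0 := Nat.cast_ne_zero.mpr (by omega)
  have hXN : (Polynomial.X : Polynomial ℂ) ^ (d ^ 2 - 1) * Polynomial.X
      = Polynomial.X ^ (d ^ 2) := by
    rw [← pow_succ]
    congr 1
    omega
  refine ⟨-1, Polynomial.C ((d ^ 2 : ℕ) : ℂ)⁻¹ * Polynomial.X, ?_⟩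
  rw [Tw, derivative_sub, derivative_C, sub_zero, derivative_C_mul, derivative_X_pow]
  have key : Polynomial.C ((d ^ 2 : ℕ) : ℂ)⁻¹ * Polynomial.X *
      (Polynomial.C 2 * (Polynomial.C ((d ^ 2 : ℕ) : ℂ) * Polynomial.X ^ (d ^ 2 - 1)))
      = Polynomial.C 2 * Polynomial.X ^ (d ^ 2) := by
    have : Polynomial.C ((d ^ 2 : ℕ) : ℂ)⁻¹ * Polynomial.X *
        (Polynomial.C 2 * (Polynomial.C ((d ^ 2 : ℕ) : ℂ) * Polynomial.X ^ (d ^ 2 - 1)))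
        = (Polynomial.C ((d ^ 2 : ℕ) : ℂ)⁻¹ * Polynomial.C ((d ^ 2 : ℕ) : ℂ)) *
          Polynomial.C 2 * (Polynomial.X ^ (d ^ 2 - 1) * Polynomial.X) := by ring
    rw [this, hXN, ← Polynomial.C_mul, inv_mul_cancel₀ hN0]
    simp
  rw [key, Polynomial.C_1]
  ring

lemma card_roots_Tw (hd : 1 ≤ d) : Multiset.card (Tw (d := d)).roots = d ^ 2 := by
  have hs : (Tw (d := d)).Splits := IsAlgClosed.splits _
  have := hs.natDegree_eq_card_roots.symm
  rw [this, natDegree_Tw hd]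

lemma root_Tw_ne_zero (hd : 1 ≤ d) {a : ℂ} (ha : (Tw (d := d)).eval a = 0) : a ≠ 0 := by
  intro hc
  subst hc
  rw [Tw] at ha
  have hN1 : 1 ≤ d ^ 2 := Nat.one_le_pow 2 d (by omega)
  simp [zero_pow (by omega : d ^ 2 ≠ 0)] at ha

/-- Each root of `Tw` admits a common root of the witness pair above it. -/
lemma common_root_of_Tw (hd : 1 ≤ d) {a : ℂ} (ha : (Tw (d := d)).eval a = 0) :
    ∃ b : ℂ, (Pq d a (cwf d)).eval b = 0 ∧ (Pq d a (cwg d)).eval b = 0 := by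
  have ha0 : a ≠ 0 := root_Tw_ne_zero hd ha
  have ht : (2 : ℂ) * a ^ (d ^ 2) = 1 := by
    rw [Tw] at ha
    simp at ha
    linear_combination ha
  refine ⟨(a ^ (d - 1))⁻¹, ?_, ?_⟩
  · rw [Pq_cwf hd]
    simp only [eval_sub, eval_pow, eval_X, eval_C]
    have hexp : (d - 1) * d + d = d ^ 2 := by
      obtain ⟨k, rfl⟩ : ∃ k, d = k + 1 := ⟨d - 1, by omega⟩
      simp only [Nat.add_sub_cancel]
      ring
    have hne : a ^ ((d - 1) * d) ≠ 0 := pow_ne_zero _ ha0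
    field_simp
    have hmerge : a ^ ((d - 1) * d) * (2 * a ^ d) = 2 * a ^ (d ^ 2) := by
      rw [show a ^ ((d - 1) * d) * (2 * a ^ d) = 2 * (a ^ ((d - 1) * d) * a ^ d) by ring,
        ← pow_add, hexp]
    rw [div_pow, one_pow, ← pow_mul, sub_eq_zero, div_eq_iff hne, mul_comm (2 * a ^ d), hmerge, ht]
  · rw [Pq_cwg hd]
    simp only [eval_sub, eval_mul, eval_X, eval_C]
    field_simp
    ring

/-- The witness resultant. -/
noncomputable def Rw : Polynomial ℂ := Rp d (cwf d) (cwg d)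

lemma cwf_top : cwf d (0, d) ≠ 0 := by norm_num [cwf]

lemma Rw_ne_zero (hd : 1 ≤ d) : (Rw (d := d)) ≠ 0 := by
  intro hc
  have h0 : (Rw (d := d)).eval 0 = 0 := by rw [hc]; simp
  rw [Rw, eval_Rp] at h0
  have hpa : Pq d 0 (cwf d) = Polynomial.X ^ d - Polynomial.C 0 := by
    rw [Pq_cwf hd, zero_pow (by omega : d ≠ 0), mul_zero]
  have hco : IsCoprime (Pq d 0 (cwf d)) (Pq d 0 (cwg d)) := by
    rcases Nat.lt_or_ge d 2 with h2 | h2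
    · -- d = 1
      have hd1 : d = 1 := by omega
      subst hd1
      rw [Pq_cwg le_rfl]
      refine ⟨1, -1, ?_⟩
      rw [hpa]
      simp
    · rw [Pq_cwg hd]
      refine ⟨0, -Polynomial.C 1, ?_⟩
      rw [zero_pow (by omega : d - 1 ≠ 0)]
      simp
  have hq0 : Pq d 0 (cwg d) ≠ 0 := by
    intro hc'
    have := congrArg (Polynomial.eval 0) hc'
    rw [Pq_cwg hd] at this
    simp at this
  exact det_syl_ne_zero (natDegree_Pq_le d 0 (cwf d)) (coeff_Pq_top_ne cwf_top)
    (natDegree_Pq_le d 0 (cwg d)) hq0 hco h0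

lemma roots_Tw_subset (hd : 1 ≤ d) :
    (Tw (d := d)).roots.toFinset ⊆ (Rw (d := d)).roots.toFinset := by
  intro a ha
  rw [Multiset.mem_toFinset, mem_roots (Tw_ne_zero hd)] at ha
  obtain ⟨b, h1, h2⟩ := common_root_of_Tw hd ha
  rw [Multiset.mem_toFinset, mem_roots (Rw_ne_zero hd)]
  exact Rp_eval_eq_zero cwf_top h1 h2

lemma card_toFinset_roots_Tw (hd : 1 ≤ d) :
    (Tw (d := d)).roots.toFinset.card = d ^ 2 := by
  rw [Multiset.toFinset_card_of_nodup (nodup_roots (separable_Tw hd)), card_roots_Tw hd]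

lemma natDegree_Rw (hd : 1 ≤ d) : (Rw (d := d)).natDegree = d ^ 2 := by
  have h1 : (Rw (d := d)).natDegree ≤ d ^ 2 := natDegree_Rp_le d _ _
  have h2 := Polynomial.card_roots' (Rw (d := d))
  have h3 : ((Rw (d := d)).roots.toFinset.card : ℕ) ≤ Multiset.card (Rw (d := d)).roots :=
    Multiset.toFinset_card_le _
  have h4 : d ^ 2 ≤ (Rw (d := d)).roots.toFinset.card := by
    rw [← card_toFinset_roots_Tw hd]
    exact Finset.card_le_card (roots_Tw_subset hd)
  omega

lemma nodup_roots_Rw (hd : 1 ≤ d) : (Rw (d := d)).roots.Nodup := by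
  rw [← Multiset.toFinset_card_eq_card_iff_nodup]
  have h2 := Polynomial.card_roots' (Rw (d := d))
  have h3 := Multiset.toFinset_card_le (Rw (d := d)).roots
  have h4 : d ^ 2 ≤ (Rw (d := d)).roots.toFinset.card := by
    rw [← card_toFinset_roots_Tw hd]
    exact Finset.card_le_card (roots_Tw_subset hd)
  have h5 := natDegree_Rw hd
  omega

lemma roots_Rw_eq (hd : 1 ≤ d) :
    (Rw (d := d)).roots.toFinset = (Tw (d := d)).roots.toFinset := by
  symm
  apply Finset.eq_of_subset_of_card_le (roots_Tw_subset hd)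
  rw [card_toFinset_roots_Tw hd]
  have h2 := Polynomial.card_roots' (Rw (d := d))
  have h3 := Multiset.toFinset_card_le (Rw (d := d)).roots
  have h5 := natDegree_Rw hd
  omega

lemma D2w_ne_zero (hd : 1 ≤ d) : D2 d (cwf d) (cwg d) ≠ 0 := by
  rw [D2]
  have : (Rp d (cwf d) (cwg d)).coeff (d ^ 2) = (Rw (d := d)).leadingCoeff := by
    rw [Polynomial.leadingCoeff, natDegree_Rw hd]; rfl
  rw [this]
  exact leadingCoeff_ne_zero.mpr (Rw_ne_zero hd)

lemma separable_Rw (hd : 1 ≤ d) : (Rw (d := d)).Separable := by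
  have hsplit : (Rw (d := d)).Splits := IsAlgClosed.splits _
  have heq := hsplit.eq_prod_roots
  have hnodup := nodup_roots_Rw hd
  have hsepprod : ((Multiset.map (fun a => Polynomial.X - Polynomial.C a)
      (Rw (d := d)).roots).prod).Separable := by
    have hded : (Rw (d := d)).roots.toFinset.val = (Rw (d := d)).roots :=
      Multiset.dedup_eq_self.mpr hnodup
    have hprod : (∏ r ∈ (Rw (d := d)).roots.toFinset, (Polynomial.X - Polynomial.C r))
        = (Multiset.map (fun a => Polynomial.X - Polynomial.C a) (Rw (d := d)).roots).prod := by
      rw [Finset.prod_eq_multiset_prod, hded]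
    rw [← hprod]
    exact separable_prod_X_sub_C_iff'.mpr (fun x _ y _ h => h)
  have hlc : (Rw (d := d)).leadingCoeff ≠ 0 := leadingCoeff_ne_zero.mpr (Rw_ne_zero hd)
  have hCsep : (Polynomial.C (Rw (d := d)).leadingCoeff).Separable :=
    (separable_C _).mpr (isUnit_iff_ne_zero.mpr hlc)
  have hco : IsCoprime (Polynomial.C (Rw (d := d)).leadingCoeff)
      ((Multiset.map (fun a => Polynomial.X - Polynomial.C a) (Rw (d := d)).roots).prod) := by
    refine ⟨Polynomial.C (Rw (d := d)).leadingCoeff⁻¹, 0, ?_⟩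
    rw [zero_mul, add_zero, ← Polynomial.C_mul, inv_mul_cancel₀ hlc, Polynomial.C_1]
  rw [heq]
  exact hCsep.mul hsepprod hco

lemma D3w_ne_zero (hd : 1 ≤ d) : D3 d (cwf d) (cwg d) ≠ 0 := by
  rw [D3]
  have hRdeg := natDegree_Rw hd
  have hN1 : 1 ≤ d ^ 2 := Nat.one_le_pow 2 d (by omega)
  have hder0 : derivative (Rw (d := d)) ≠ 0 := by
    intro hc
    have := natDegree_eq_zero_of_derivative_eq_zero hc
    omega
  have hderdeg : (derivative (Rw (d := d))).natDegree ≤ d ^ 2 - 1 := by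
    have := natDegree_derivative_lt (p := Rw (d := d)) (by omega)
    omega
  have hcoeff : (Rw (d := d)).coeff (d ^ 2) ≠ 0 := D2w_ne_zero hd
  exact det_syl_ne_zero (natDegree_Rp_le d _ _) hcoeff hderdeg hder0 (separable_Rw hd)

lemma S1w_eval_ne_zero (hd : 1 ≤ d) {a : ℂ} (ha : (Tw (d := d)).eval a = 0) :
    (S1p d (cwf d) (cwg d)).eval a ≠ 0 := by
  intro contra
  have ha0 : a ≠ 0 := root_Tw_ne_zero hd ha
  rw [eval_S1p] at contra
  have hpa : (Pq d a (cwf d)).natDegree ≤ (d - 1) + 1 := by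
    have := natDegree_Pq_le d a (cwf d); omega
  have hqa : (Pq d a (cwg d)).natDegree ≤ (d - 1) + 1 := by
    have := natDegree_Pq_le d a (cwg d); omega
  obtain ⟨u, w, hne, hu, hw, hu0, hw0, heq⟩ := exists_of_det_syl1_eq_zero hpa hqa contra
  obtain ⟨b, hb1, hb2⟩ := common_root_of_Tw hd ha
  -- the constant is zero
  have hc0 : (u * Pq d a (cwf d) + w * Pq d a (cwg d)).coeff 0 = 0 := by
    have := congrArg (Polynomial.eval b) heq
    rw [eval_add, eval_mul, eval_mul, hb1, hb2, mul_zero, mul_zero, add_zero, eval_C] at this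
    exact this.symm
  rw [hc0, Polynomial.C_0] at heq
  have hqane : Pq d a (cwg d) ≠ 0 := by
    intro hc'
    have := congrArg (Polynomial.eval 0) hc'
    rw [Pq_cwg hd] at this
    simp at this
  have hpane : Pq d a (cwf d) ≠ 0 := Pq_ne_zero cwf_top
  by_cases hu' : u = 0
  · subst hu'
    rw [zero_mul, zero_add] at heq
    rcases mul_eq_zero.mp heq with h | h
    · exact hne ⟨rfl, h⟩
    · exact hqane h
  · have hwne : w ≠ 0 := by
      intro hc'
      subst hc'
      rw [zero_mul, add_zero] at heq
      rcases mul_eq_zero.mp heq with h | h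
      · exact hu' h
      · exact hpane h
    have hd2 : 2 ≤ d := by
      rcases Nat.lt_or_ge d 2 with h2 | h2
      · exfalso
        have : d - 1 = 0 := by omega
        exact hu' (hu0 this)
      · exact h2
    -- degree contradiction
    have hpadeg : (Pq d a (cwf d)).natDegree = d := by
      rw [Pq_cwf hd, natDegree_X_pow_sub_C]
    have hqadeg : (Pq d a (cwg d)).natDegree ≤ 1 := by
      rw [Pq_cwg hd]
      have : Polynomial.C (a ^ (d - 1)) * Polynomial.X - Polynomial.C 1
          = Polynomial.C (a ^ (d - 1)) * Polynomial.X + Polynomial.C (-1) := by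
        rw [map_neg]; ring
      rw [this]
      exact natDegree_linear_le
    have heq2 : u * Pq d a (cwf d) = -(w * Pq d a (cwg d)) := by
      linear_combination heq
    have hL : (u * Pq d a (cwf d)).natDegree = u.natDegree + d := by
      rw [natDegree_mul hu' hpane, hpadeg]
    have hR : (-(w * Pq d a (cwg d))).natDegree ≤ (d - 2) + 1 := by
      rw [natDegree_neg, natDegree_mul hwne hqane]
      have hwdeg : w.natDegree < max (d - 1) 1 := hw
      have : max (d - 1) 1 = d - 1 := by omega
      omega
    rw [heq2] at hL
    omega

lemma S1w_ne_zero (hd : 1 ≤ d) : S1p d (cwf d) (cwg d) ≠ 0 := by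
  have hcard := card_roots_Tw (d := d) hd
  have hpos : 0 < Multiset.card (Tw (d := d)).roots := by
    have hN1 : 1 ≤ d ^ 2 := Nat.one_le_pow 2 d (by omega)
    omega
  obtain ⟨a, ha⟩ := Multiset.card_pos_iff_exists_mem.mp hpos
  rw [mem_roots (Tw_ne_zero hd)] at ha
  intro hc
  exact S1w_eval_ne_zero hd ha (by rw [hc]; simp)

lemma coprime_Rw_S1w (hd : 1 ≤ d) :
    IsCoprime (Rw (d := d)) (S1p d (cwf d) (cwg d)) := by
  classical
  rw [← EuclideanDomain.gcd_isUnit_iff]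
  by_contra hunit
  set G := EuclideanDomain.gcd (Rw (d := d)) (S1p d (cwf d) (cwg d)) with hG
  have hgcd0 : G ≠ 0 := by
    intro hc
    exact Rw_ne_zero hd (EuclideanDomain.gcd_eq_zero_iff.mp hc).1
  have hdeg : G.degree ≠ 0 := fun hc => hunit (Polynomial.isUnit_iff_degree_eq_zero.mpr hc)
  obtain ⟨z, hz⟩ := IsAlgClosed.exists_root G hdeg
  have h1 : (Rw (d := d)).eval z = 0 :=
    eval_eq_zero_of_dvd_of_eval_eq_zero (EuclideanDomain.gcd_dvd_left _ _) hz
  have h2 : (S1p d (cwf d) (cwg d)).eval z = 0 :=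
    eval_eq_zero_of_dvd_of_eval_eq_zero (EuclideanDomain.gcd_dvd_right _ _) hz
  have hzT : (Tw (d := d)).eval z = 0 := by
    have : z ∈ (Rw (d := d)).roots.toFinset := by
      rw [Multiset.mem_toFinset, mem_roots (Rw_ne_zero hd)]
      exact h1
    rw [roots_Rw_eq hd, Multiset.mem_toFinset, mem_roots (Tw_ne_zero hd)] at this
    exact this
  exact S1w_eval_ne_zero hd hzT h2

lemma D4w_ne_zero (hd : 1 ≤ d) : D4 d (cwf d) (cwg d) ≠ 0 := by
  rw [D4]
  exact det_syl_ne_zero (natDegree_Rp_le d _ _) (D2w_ne_zero hd)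
    (natDegree_S1p_le d _ _) (S1w_ne_zero hd) (coprime_Rw_S1w hd)

end Witness

section Glue

open MvPolynomial in
/-- The exponent bookkeeping function. -/
noncomputable def mu (ij : ℕ × ℕ) : Fin 2 →₀ ℕ :=
  Finsupp.single 0 ij.1 + Finsupp.single 1 ij.2

lemma mu_apply0 (ij : ℕ × ℕ) : mu ij 0 = ij.1 := by
  simp [mu, Finsupp.single_apply]

lemma mu_apply1 (ij : ℕ × ℕ) : mu ij 1 = ij.2 := by
  simp [mu, Finsupp.single_apply]

lemma mu_inj : Function.Injective mu := by
  intro x y h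
  have h0 := congrArg (fun m => m 0) h
  have h1 := congrArg (fun m => m 1) h
  simp only [mu_apply0, mu_apply1] at h0 h1
  exact Prod.ext h0 h1

lemma finsupp_eq_mu (m : Fin 2 →₀ ℕ) : m = mu (m 0, m 1) := by
  ext k
  fin_cases k
  · simp [mu_apply0]
  · simp [mu_apply1]

lemma finsupp_sum_eq (m : Fin 2 →₀ ℕ) : (m.sum fun _ e => e) = m 0 + m 1 := by
  rw [Finsupp.sum]
  rw [Finset.sum_subset (Finset.subset_univ m.support)]
  · exact Fin.sum_univ_two m
  · intro k _ hk
    exact Finsupp.notMem_support_iff.mp hk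

lemma eval_eq_sum_T {d : ℕ} (f : MvPolynomial (Fin 2) ℂ) (hf : f.totalDegree ≤ d) (a b : ℂ) :
    MvPolynomial.eval ![a, b] f
      = ∑ ij ∈ Tset d, MvPolynomial.coeff (mu ij) f * a ^ ij.1 * b ^ ij.2 := by
  rw [MvPolynomial.eval_eq']
  have hsub : f.support ⊆ (Tset d).image mu := by
    intro m hm
    rw [Finset.mem_image]
    refine ⟨(m 0, m 1), mem_Tset.mpr ?_, (finsupp_eq_mu m).symm⟩
    have h1 := MvPolynomial.le_totalDegree hm
    rw [finsupp_sum_eq] at h1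
    exact le_trans h1 hf
  rw [Finset.sum_subset hsub ?_]
  · rw [Finset.sum_image (fun x _ y _ h => mu_inj h)]
    refine Finset.sum_congr rfl (fun ij _ => ?_)
    rw [Fin.prod_univ_two, mu_apply0, mu_apply1]
    have ha : (![a, b] : Fin 2 → ℂ) 0 = a := rfl
    have hb : (![a, b] : Fin 2 → ℂ) 1 = b := rfl
    rw [ha, hb, mul_assoc]
  · intro m _ hm
    rw [MvPolynomial.notMem_support_iff.mp hm, zero_mul]

lemma coeff_mu_eq_zero {d : ℕ} (f : MvPolynomial (Fin 2) ℂ) (hf : f.totalDegree ≤ d)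
    {ij : ℕ × ℕ} (hij : ¬ ij.1 + ij.2 ≤ d) : MvPolynomial.coeff (mu ij) f = 0 := by
  apply MvPolynomial.coeff_eq_zero_of_totalDegree_lt
  have : ∑ i ∈ (mu ij).support, mu ij i = ij.1 + ij.2 := by
    have := finsupp_sum_eq (mu ij)
    rw [Finsupp.sum] at this
    rw [this, mu_apply0, mu_apply1]
  omega

end Glue

end CardSing

open MvPolynomial CardSing

/-- number of singular points.
Let `d ≥ 1` and let `f, g ∈ ℂ[x,y]` have degree at most `d`, with the
`(d+1)(d+2)` coefficients `f_{ij}, g_{ij}` (`i + j ≤ d`) algebraically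
independent over `ℚ`. Then the set of common zeros of `f` and `g` in `ℂ²`
(the singular points of `v = f ∂/∂x + g ∂/∂y`) is finite of cardinality `d²`. -/
theorem card_singular_points
    (d : ℕ) (hd : 1 ≤ d)
    (f g : MvPolynomial (Fin 2) ℂ)
    (hf : f.totalDegree ≤ d) (hg : g.totalDegree ≤ d)
    (hindep : AlgebraicIndependent ℚ
      (fun c : Bool × {ij : ℕ × ℕ // ij.1 + ij.2 ≤ d} =>
        MvPolynomial.coeff
          (Finsupp.single (0 : Fin 2) c.2.1.1 + Finsupp.single (1 : Fin 2) c.2.1.2)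
          (if c.1 then f else g))) :
    {ab : ℂ × ℂ | MvPolynomial.eval ![ab.1, ab.2] f = 0 ∧
        MvPolynomial.eval ![ab.1, ab.2] g = 0}.Finite ∧
      {ab : ℂ × ℂ | MvPolynomial.eval ![ab.1, ab.2] f = 0 ∧
        MvPolynomial.eval ![ab.1, ab.2] g = 0}.ncard = d ^ 2 := by
  classical
  -- coefficient families
  set xfam : Bool × {ij : ℕ × ℕ // ij.1 + ij.2 ≤ d} → ℂ :=
    (fun c => MvPolynomial.coeff
      (Finsupp.single (0 : Fin 2) c.2.1.1 + Finsupp.single (1 : Fin 2) c.2.1.2)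
      (if c.1 then f else g)) with hxfam
  have hxmu : ∀ c : Bool × {ij : ℕ × ℕ // ij.1 + ij.2 ≤ d},
      xfam c = MvPolynomial.coeff (mu c.2.1) (if c.1 then f else g) := fun c => rfl
  set cf : ℕ × ℕ → ℂ := fun ij => MvPolynomial.coeff (mu ij) f with hcf
  set cg : ℕ × ℕ → ℂ := fun ij => MvPolynomial.coeff (mu ij) g with hcg
  set cF : ℕ × ℕ → MvPolynomial (Bool × {ij : ℕ × ℕ // ij.1 + ij.2 ≤ d}) ℚ :=
    fun ij => if h : ij.1 + ij.2 ≤ d then MvPolynomial.X (true, ⟨ij, h⟩) else 0 with hcF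
  set cG : ℕ × ℕ → MvPolynomial (Bool × {ij : ℕ × ℕ // ij.1 + ij.2 ≤ d}) ℚ :=
    fun ij => if h : ij.1 + ij.2 ≤ d then MvPolynomial.X (false, ⟨ij, h⟩) else 0 with hcG
  set Φ : MvPolynomial (Bool × {ij : ℕ × ℕ // ij.1 + ij.2 ≤ d}) ℚ →+* ℂ :=
    (MvPolynomial.aeval xfam).toRingHom with hΦ
  have hΦinj : Function.Injective Φ := by
    have := algebraicIndependent_iff_injective_aeval.mp hindep
    exact this
  have hΦF : ∀ ij, Φ (cF ij) = cf ij := by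
    intro ij
    simp only [hcF]
    by_cases h : ij.1 + ij.2 ≤ d
    · rw [dif_pos h]
      show (MvPolynomial.aeval xfam) (MvPolynomial.X (true, ⟨ij, h⟩)) = _
      rw [MvPolynomial.aeval_X, hxmu]
      simp [hcf]
    · rw [dif_neg h, map_zero, hcf]
      exact (coeff_mu_eq_zero f hf h).symm
  have hΦG : ∀ ij, Φ (cG ij) = cg ij := by
    intro ij
    simp only [hcG]
    by_cases h : ij.1 + ij.2 ≤ d
    · rw [dif_pos h]
      show (MvPolynomial.aeval xfam) (MvPolynomial.X (false, ⟨ij, h⟩)) = _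
      rw [MvPolynomial.aeval_X, hxmu]
      simp [hcg]
    · rw [dif_neg h, map_zero, hcg]
      exact (coeff_mu_eq_zero g hg h).symm
  have hΦFfun : (fun ij => Φ (cF ij)) = cf := funext hΦF
  have hΦGfun : (fun ij => Φ (cG ij)) = cg := funext hΦG
  -- witness homomorphism
  set wfam : Bool × {ij : ℕ × ℕ // ij.1 + ij.2 ≤ d} → ℂ :=
    fun c => if c.1 then cwf d c.2.1 else cwg d c.2.1 with hwfam
  set Ψ : MvPolynomial (Bool × {ij : ℕ × ℕ // ij.1 + ij.2 ≤ d}) ℚ →+* ℂ :=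
    (MvPolynomial.aeval wfam).toRingHom with hΨ
  have hcwf_zero : ∀ ij : ℕ × ℕ, ¬ ij.1 + ij.2 ≤ d → cwf d ij = 0 := by
    intro ij h
    rw [cwf, if_neg, if_neg]
    · intro hc; rw [hc] at h; simp at h
    · intro hc; rw [hc] at h; simp at h
  have hcwg_zero : ∀ ij : ℕ × ℕ, ¬ ij.1 + ij.2 ≤ d → cwg d ij = 0 := by
    intro ij h
    rw [cwg, if_neg, if_neg]
    · intro hc; rw [hc] at h; simp at h
    · intro hc; rw [hc] at h; omega
  have hΨF : (fun ij => Ψ (cF ij)) = cwf d := by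
    funext ij
    simp only [hcF]
    by_cases h : ij.1 + ij.2 ≤ d
    · rw [dif_pos h]
      show (MvPolynomial.aeval wfam) (MvPolynomial.X (true, ⟨ij, h⟩)) = _
      rw [MvPolynomial.aeval_X]
      simp [hwfam]
    · rw [dif_neg h, map_zero]
      exact (hcwf_zero ij h).symm
  have hΨG : (fun ij => Ψ (cG ij)) = cwg d := by
    funext ij
    simp only [hcG]
    by_cases h : ij.1 + ij.2 ≤ d
    · rw [dif_pos h]
      show (MvPolynomial.aeval wfam) (MvPolynomial.X (false, ⟨ij, h⟩)) = _
      rw [MvPolynomial.aeval_X]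
      simp [hwfam]
    · rw [dif_neg h, map_zero]
      exact (hcwg_zero ij h).symm
  -- transfer of the nonvanishing of D2, D3, D4
  have hD2R0 : D2 d cF cG ≠ 0 := by
    intro h0
    have := map_D2 Ψ d cF cG
    rw [h0, map_zero, hΨF, hΨG] at this
    exact D2w_ne_zero hd this.symm
  have hD3R0 : D3 d cF cG ≠ 0 := by
    intro h0
    have := map_D3 Ψ d cF cG
    rw [h0, map_zero, hΨF, hΨG] at this
    exact D3w_ne_zero hd this.symm
  have hD4R0 : D4 d cF cG ≠ 0 := by
    intro h0
    have := map_D4 Ψ d cF cG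
    rw [h0, map_zero, hΨF, hΨG] at this
    exact D4w_ne_zero hd this.symm
  have hD2 : D2 d cf cg ≠ 0 := by
    intro h0
    apply hD2R0
    apply hΦinj
    show Φ _ = Φ _
    rw [map_D2 Φ d cF cG, hΦFfun, hΦGfun, map_zero, h0]
  have hD3 : D3 d cf cg ≠ 0 := by
    intro h0
    apply hD3R0
    apply hΦinj
    show Φ _ = Φ _
    rw [map_D3 Φ d cF cG, hΦFfun, hΦGfun, map_zero, h0]
  have hD4 : D4 d cf cg ≠ 0 := by
    intro h0
    apply hD4R0
    apply hΦinj
    show Φ _ = Φ _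
    rw [map_D4 Φ d cF cG, hΦFfun, hΦGfun, map_zero, h0]
  have hcf_top : cf (0, d) ≠ 0 := by
    intro h0
    have hX : (MvPolynomial.X (true, ⟨(0, d), by simp⟩) :
        MvPolynomial (Bool × {ij : ℕ × ℕ // ij.1 + ij.2 ≤ d}) ℚ) ≠ 0 :=
      MvPolynomial.X_ne_zero _
    apply hX
    apply hΦinj
    show Φ _ = Φ _
    rw [map_zero]
    calc Φ (MvPolynomial.X (true, ⟨(0, d), by simp⟩)) = cf (0, d) := by
          have := hΦF (0, d)
          simp only [hcF] at this
          rw [dif_pos (by simp : (0 : ℕ) + d ≤ d)] at this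
          exact this
      _ = 0 := h0
  have hcg_top : cg (0, d) ≠ 0 := by
    intro h0
    have hX : (MvPolynomial.X (false, ⟨(0, d), by simp⟩) :
        MvPolynomial (Bool × {ij : ℕ × ℕ // ij.1 + ij.2 ≤ d}) ℚ) ≠ 0 :=
      MvPolynomial.X_ne_zero _
    apply hX
    apply hΦinj
    show Φ _ = Φ _
    rw [map_zero]
    calc Φ (MvPolynomial.X (false, ⟨(0, d), by simp⟩)) = cg (0, d) := by
          have := hΦG (0, d)
          simp only [hcG] at this
          rw [dif_pos (by simp : (0 : ℕ) + d ≤ d)] at this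
          exact this
      _ = 0 := h0
  -- the resultant over ℂ
  set R := Rp d cf cg with hR
  have hR0 : R ≠ 0 := by
    intro h0
    apply hD2
    rw [D2, ← hR, h0, Polynomial.coeff_zero]
  have hdegR : R.natDegree = d ^ 2 :=
    le_antisymm (natDegree_Rp_le d cf cg) (Polynomial.le_natDegree_of_ne_zero hD2)
  have hN1 : 1 ≤ d ^ 2 := Nat.one_le_pow 2 d (by omega)
  -- separability of R
  have hsepR : R.Separable := by
    rw [Polynomial.Separable]
    by_contra hnc
    apply hD3
    set G := EuclideanDomain.gcd R (Polynomial.derivative R) with hG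
    have hgcd0 : G ≠ 0 := by
      intro hc
      exact hR0 (EuclideanDomain.gcd_eq_zero_iff.mp hc).1
    have hGunit : ¬ IsUnit G := fun hu => hnc (EuclideanDomain.gcd_isUnit_iff.mp hu)
    have hGdeg : 1 ≤ G.natDegree := by
      by_contra hc
      apply hGunit
      apply Polynomial.isUnit_iff_degree_eq_zero.mpr
      rw [Polynomial.degree_eq_natDegree hgcd0]
      have : G.natDegree = 0 := by omega
      rw [this]
      rfl
    have hq : (Polynomial.derivative R).natDegree ≤ (d ^ 2 - 1) + 0 := by
      by_cases hz : Polynomial.derivative R = 0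
      · rw [hz, Polynomial.natDegree_zero]; omega
      · have h2 : (Polynomial.derivative R).natDegree < R.natDegree :=
          Polynomial.natDegree_derivative_lt (by rw [hdegR]; omega)
        rw [hdegR] at h2
        omega
    rw [D3]
    exact det_syl_eq_zero_of_dvd (s := 0) (n := d ^ 2) (m := d ^ 2 - 1)
      (by simpa using natDegree_Rp_le d cf cg) hq hR0
      (by simpa using hGdeg) (EuclideanDomain.gcd_dvd_left _ _)
      (EuclideanDomain.gcd_dvd_right _ _)
  -- counting the roots of R
  have hsplit : R.Splits := IsAlgClosed.splits _
  have hcardroots : Multiset.card R.roots = d ^ 2 := by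
    have := hsplit.natDegree_eq_card_roots.symm
    rw [this, hdegR]
  have hnodup : R.roots.Nodup := Polynomial.nodup_roots hsepR
  have hcardF : R.roots.toFinset.card = d ^ 2 := by
    rw [Multiset.toFinset_card_of_nodup hnodup, hcardroots]
  -- the zero set and the projection
  set Z : Set (ℂ × ℂ) := {ab : ℂ × ℂ | MvPolynomial.eval ![ab.1, ab.2] f = 0 ∧
      MvPolynomial.eval ![ab.1, ab.2] g = 0} with hZ
  have hmem : ∀ ab : ℂ × ℂ, ab ∈ Z ↔
      ((Pq d ab.1 cf).eval ab.2 = 0 ∧ (Pq d ab.1 cg).eval ab.2 = 0) := by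
    intro ab
    rw [hZ, Set.mem_setOf_eq, eval_eq_sum_T f hf ab.1 ab.2, eval_eq_sum_T g hg ab.1 ab.2,
      eval_Pq, eval_Pq]
  set π : ℂ × ℂ → ℂ := Prod.fst with hπ
  have hmapsto : ∀ ab ∈ Z, π ab ∈ (R.roots.toFinset : Set ℂ) := by
    intro ab hab
    rw [hmem] at hab
    simp only [Finset.mem_coe, Multiset.mem_toFinset, Polynomial.mem_roots hR0]
    exact Rp_eval_eq_zero hcf_top hab.1 hab.2
  have hinj : Set.InjOn π Z := by
    intro ab1 h1 ab2 h2 heq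
    rw [hmem] at h1 h2
    rw [hπ] at heq
    by_cases hb : ab1.2 = ab2.2
    · exact Prod.ext heq hb
    exfalso
    have hS1 : (S1p d cf cg).eval ab1.1 = 0 := by
      refine S1p_eval_eq_zero hd hcf_top hb h1.1 h1.2 ?_ ?_
      · rw [heq]; exact h2.1
      · rw [heq]; exact h2.2
    have hRa : R.eval ab1.1 = 0 := Rp_eval_eq_zero hcf_top h1.1 h1.2
    apply hD4
    rw [D4]
    refine det_syl_eq_zero_of_dvd (h := Polynomial.X - Polynomial.C ab1.1)
      (by simpa using natDegree_Rp_le d cf cg) (by simpa using natDegree_S1p_le d cf cg)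
      hR0 (by simp) ?_ ?_
    · exact Polynomial.dvd_iff_isRoot.mpr hRa
    · exact Polynomial.dvd_iff_isRoot.mpr hS1
  have hsurj : ∀ a ∈ (R.roots.toFinset : Set ℂ), ∃ ab ∈ Z, π ab = a := by
    intro a ha
    simp only [Finset.mem_coe, Multiset.mem_toFinset, Polynomial.mem_roots hR0] at ha
    obtain ⟨b, hb1, hb2⟩ := exists_common_root hcf_top hcg_top ha
    exact ⟨(a, b), (hmem (a, b)).mpr ⟨hb1, hb2⟩, rfl⟩
  have himage : π '' Z = (R.roots.toFinset : Set ℂ) := by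
    apply Set.eq_of_subset_of_subset
    · rintro x ⟨ab, hab, rfl⟩
      exact hmapsto ab hab
    · intro a ha
      obtain ⟨ab, hab, hπab⟩ := hsurj a ha
      exact ⟨ab, hab, hπab⟩
  have hfin : Z.Finite := by
    apply Set.Finite.of_finite_image ?_ hinj
    rw [himage]
    exact (R.roots.toFinset : Set ℂ).toFinite
  refine ⟨hfin, ?_⟩
  have := Set.ncard_image_of_injOn hinj
  rw [himage, Set.ncard_coe_finset, hcardF] at this
  exact this.symm
end

section
/- Let A be a unique factorization domain containing ℚ and let δ : A → A be a derivation. Let p ∈ A be a nonzero non-unit such that δ(p) belongs to the principal ideal (p). Then for every irreducible factor q of p, δ(q) belongs to the principal ideal (q). -/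
/-- irreducible components of an invariant divisor are
invariant. Let `A` be a UFD containing `ℚ` and `δ` a derivation of `A`.
If `p ∈ A` is a nonzero non-unit with `δ p ∈ (p)`, then every irreducible
factor `q` of `p` satisfies `δ q ∈ (q)`.  (Note that on a `ℚ`-algebra every
additive map satisfying the Leibniz rule is automatically `ℚ`-linear.) -/
theorem irreducible_factor_invariant
    (A : Type*) [CommRing A] [IsDomain A] [UniqueFactorizationMonoid A]
    [Algebra ℚ A] (δ : Derivation ℚ A A)
    (p : A) (hp0 : p ≠ 0) (hpu : ¬ IsUnit p)
    (hp : δ p ∈ Ideal.span {p})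
    (q : A) (hq : Irreducible q) (hqp : q ∣ p) :
    δ q ∈ Ideal.span {q} := by
  classical
  rw [Ideal.mem_span_singleton] at hp ⊢
  obtain ⟨c, hc⟩ := hp
  obtain ⟨n, r, hr, hpe⟩ := WfDvdMonoid.max_power_factor hp0 hq
  have hn : 1 ≤ n := by
    rcases Nat.eq_zero_or_pos n with h | h
    · subst h; simp at hpe; exact absurd (hpe ▸ hqp) hr
    · exact h
  have key : p * c = q ^ n * δ r + r * ((n : A) * q ^ (n - 1) * δ q) := by
    rw [← hc, hpe, Derivation.leibniz, Derivation.leibniz_pow]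
    simp only [smul_eq_mul]; ring
  have hq0 : q ≠ 0 := hq.ne_zero
  have cancel : (n : A) * r * δ q = q * (r * c - δ r) := by
    have h2 : q ^ (n - 1) * ((n : A) * r * δ q) = q ^ (n - 1) * (q * (r * c - δ r)) := by
      have hqn : q ^ n = q ^ (n - 1) * q := by
        conv_lhs => rw [← Nat.sub_add_cancel hn]
        rw [pow_succ]
      rw [hpe] at key
      rw [hqn] at key
      linear_combination -key
    exact mul_left_cancel₀ (pow_ne_zero _ hq0) h2
  have hdvd : q ∣ (n : A) * r * δ q := ⟨r * c - δ r, cancel⟩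
  have hnu : IsUnit (n : A) := by
    have h2 : IsUnit (algebraMap ℚ A (n : ℚ)) :=
      (isUnit_iff_ne_zero.mpr (Nat.cast_ne_zero.mpr (Nat.one_le_iff_ne_zero.mp hn))).map
        (algebraMap ℚ A)
    rwa [map_natCast] at h2
  rcases hq.prime.2.2 _ _ hdvd with h | h
  · rcases hq.prime.2.2 _ _ h with h' | h'
    · exact absurd (isUnit_of_dvd_unit h' hnu) hq.1
    · exact absurd h' hr
  · exact h
end

section
/- Let A be a commutative ring containing ℚ, let δ : A → A be a derivation, and let I be an ideal of A with δ(I) ⊆ I. Then the radical √I also satisfies δ(√I) ⊆ √I. -/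
lemma div_nat_mem (A : Type*) [CommRing A] [Algebra ℚ A] (I : Ideal A)
    (c : ℕ) (hc : c ≠ 0) (x : A) (h : c • x ∈ I) : x ∈ I := by
  have : x = algebraMap ℚ A ((c : ℚ)⁻¹) * (c • x) := by
    rw [nsmul_eq_mul, ← mul_assoc]
    have : algebraMap ℚ A ((c : ℚ)⁻¹) * (c : A) = 1 := by
      rw [show ((c : A)) = algebraMap ℚ A (c : ℚ) by push_cast; ring, ← map_mul]
      rw [inv_mul_cancel₀ (by exact_mod_cast hc), map_one]
    rw [this, one_mul]
  rw [this]
  exact Ideal.mul_mem_left _ _ h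

/-- the radical of a differential ideal is differential.
Let `A` be a commutative ring containing `ℚ`, `δ` a derivation of `A` and `I`
an ideal with `δ(I) ⊆ I`. Then `δ(√I) ⊆ √I`.  (Note that on a `ℚ`-algebra
every additive map satisfying the Leibniz rule is automatically `ℚ`-linear.) -/
theorem radical_of_differential_ideal_is_differential
    (A : Type*) [CommRing A] [Algebra ℚ A] (δ : Derivation ℚ A A)
    (I : Ideal A) (hI : ∀ a ∈ I, δ a ∈ I) :
    ∀ a ∈ I.radical, δ a ∈ I.radical := by
  intro a ha
  obtain ⟨n, hn⟩ := ha
  rcases n with _ | m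
  · -- n = 0 : 1 ∈ I
    have h1 : (1 : A) ∈ I := by simpa using hn
    exact Ideal.le_radical (by simpa using I.mul_mem_left (δ a) h1)
  · -- key claim
    have key : ∀ j k : ℕ, j + k = m → a ^ k * δ a ^ (2 * j + 1) ∈ I := by
      intro j
      induction j with
      | zero =>
        intro k hk
        have h1 : δ (a ^ (m + 1)) ∈ I := hI _ hn
        rw [Derivation.leibniz_pow] at h1
        simp only [Nat.add_sub_cancel, smul_smul] at h1
        have h2 := div_nat_mem A I (m+1) (by omega) (a ^ m • δ a) h1
        have hkm : k = m := by omega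
        subst hkm
        simpa [smul_eq_mul] using h2
      | succ j ih =>
        intro k hk
        have h := ih (k + 1) (by omega)
        have hd : δ (a ^ (k + 1) * δ a ^ (2 * j + 1)) ∈ I := hI _ h
        have hd2 : δ (a ^ (k + 1) * δ a ^ (2 * j + 1)) * δ a ∈ I := I.mul_mem_right _ hd
        have ht : ((2 * j + 1) : ℕ) • (δ (δ a) * (a ^ (k + 1) * δ a ^ (2 * j + 1))) ∈ I :=
          by rw [nsmul_eq_mul]; exact I.mul_mem_left _ (I.mul_mem_left _ h)
        have heq : δ (a ^ (k + 1) * δ a ^ (2 * j + 1)) * δ a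
            - ((2 * j + 1) : ℕ) • (δ (δ a) * (a ^ (k + 1) * δ a ^ (2 * j + 1)))
            = (k + 1 : ℕ) • (a ^ k * δ a ^ (2 * (j + 1) + 1)) := by
          rw [Derivation.leibniz, Derivation.leibniz_pow, Derivation.leibniz_pow]
          simp only [Nat.add_sub_cancel, smul_eq_mul, nsmul_eq_mul]
          push_cast
          ring
        have hm : (k + 1 : ℕ) • (a ^ k * δ a ^ (2 * (j + 1) + 1)) ∈ I := by
          rw [← heq]; exact I.sub_mem hd2 ht
        exact div_nat_mem A I (k + 1) (by omega) _ hm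
    have := key m 0 (by omega)
    exact ⟨2 * m + 1, by simpa using this⟩
end

section
/- Let A be a commutative Noetherian ring containing ℚ, let δ : A → A be a derivation, and let I be an ideal of A with δ(I) ⊆ I. Then every minimal prime ideal P over I satisfies δ(P) ⊆ P. -/
/-- The radical of a differential ideal in a `ℚ`-algebra is differential. -/
theorem radical_differential_aux {A : Type*} [CommRing A] [Algebra ℚ A]
    (δ : Derivation ℚ A A) (I : Ideal A) (hI : ∀ a ∈ I, δ a ∈ I) :
    ∀ a ∈ I.radical, δ a ∈ I.radical := by
  intro a ha
  obtain ⟨n, hn⟩ := ha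
  have key : ∀ k, a ^ (n - k) * δ a ^ (2 * k) ∈ I := by
    intro k
    induction k with
    | zero => simpa using hn
    | succ k ih =>
      rcases le_or_gt n k with h | h
      · have h0 : n - k = 0 := Nat.sub_eq_zero_of_le h
        have h1 : n - (k + 1) = 0 := Nat.sub_eq_zero_of_le (le_trans h (Nat.le_succ k))
        rw [h0, pow_zero, one_mul] at ih
        rw [h1, pow_zero, one_mul]
        have he : δ a ^ (2 * (k + 1)) = δ a ^ (2 * k) * δ a ^ 2 := by ring
        rw [he]; exact I.mul_mem_right _ ih
      · obtain ⟨m, hm⟩ : ∃ m, n - k = m + 1 := ⟨n - k - 1, by omega⟩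
        have hm' : n - (k + 1) = m := by omega
        rw [hm] at ih
        have h1 : δ (a ^ (m + 1) * δ a ^ (2 * k)) * δ a ∈ I := I.mul_mem_right _ (hI _ ih)
        have h2 : (a ^ (m + 1) * δ a ^ (2 * k)) * ((2 * k) • δ (δ a)) ∈ I :=
          I.mul_mem_right _ ih
        have h3 : (m + 1) • (a ^ m * δ a ^ (2 * (k + 1))) ∈ I := by
          have hid : (m + 1) • (a ^ m * δ a ^ (2 * (k + 1)))
              = δ (a ^ (m + 1) * δ a ^ (2 * k)) * δ a
                - (a ^ (m + 1) * δ a ^ (2 * k)) * ((2 * k) • δ (δ a)) := by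
            rw [Derivation.leibniz, Derivation.leibniz_pow, Derivation.leibniz_pow]
            simp only [smul_eq_mul, nsmul_eq_mul]
            push_cast
            cases k with
            | zero => simp; ring
            | succ j =>
              have e1 : 2 * (j + 1) - 1 = 2 * j + 1 := by omega
              have e2 : m + 1 - 1 = m := by omega
              rw [e1]
              push_cast
              ring
          rw [hid]; exact I.sub_mem h1 h2
        have hq : ((m + 1 : ℕ) : ℚ)⁻¹ • ((m + 1) • (a ^ m * δ a ^ (2 * (k + 1)))) ∈ I := by
          rw [Algebra.smul_def]; exact I.mul_mem_left _ h3
        rw [← Nat.cast_smul_eq_nsmul ℚ, smul_smul,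
          inv_mul_cancel₀ (by exact_mod_cast Nat.succ_ne_zero m), one_smul] at hq
        rwa [hm']
  have h := key n
  rw [Nat.sub_self, pow_zero, one_mul] at h
  exact ⟨2 * n, h⟩

/-- minimal primes over a differential ideal are
differential. Let `A` be a commutative Noetherian ring containing `ℚ`, `δ` a
derivation of `A` and `I` an ideal with `δ(I) ⊆ I`. Then every minimal prime
`P` over `I` satisfies `δ(P) ⊆ P`.  (Note that on a `ℚ`-algebra every additive
map satisfying the Leibniz rule is automatically `ℚ`-linear.) -/
theorem minimal_prime_over_differential_ideal_is_differential
    (A : Type*) [CommRing A] [IsNoetherianRing A] [Algebra ℚ A]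
    (δ : Derivation ℚ A A)
    (I : Ideal A) (hI : ∀ a ∈ I, δ a ∈ I)
    (P : Ideal A) (hP : P ∈ I.minimalPrimes) :
    ∀ a ∈ P, δ a ∈ P := by
  intro a ha
  have hrad : ∀ x ∈ I.radical, δ x ∈ I.radical := radical_differential_aux δ I hI
  have hPprime : P.IsPrime := hP.1.1
  have hradP : I.radical ≤ P := hPprime.radical_le_iff.mpr hP.1.2
  have hfin : (I.minimalPrimes \ {P}).Finite := by
    apply Set.Finite.subset _ Set.diff_subset
    rw [Ideal.minimalPrimes_eq_comap]
    exact (minimalPrimes.finite_of_isNoetherianRing _).image _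
  obtain ⟨b, hb, hbP⟩ : ∃ b ∈ sInf (I.minimalPrimes \ {P}), b ∉ P := by
    by_contra hcon
    push_neg at hcon
    have hle : hfin.toFinset.inf id ≤ P := by
      rw [Finset.inf_id_eq_sInf, hfin.coe_toFinset]
      exact fun x hx => hcon x hx
    obtain ⟨Q, hQmem, hQle⟩ := (Ideal.IsPrime.inf_le' hPprime).mp hle
    rw [Set.Finite.mem_toFinset] at hQmem
    obtain ⟨hQmp, hQne⟩ := hQmem
    exact (hQne : Q ≠ P) (le_antisymm hQle (hP.2 hQmp.1 hQle))
  have hab : a * b ∈ I.radical := by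
    rw [← Ideal.sInf_minimalPrimes, Ideal.mem_sInf]
    intro Q hQ
    by_cases hQP : Q = P
    · exact Q.mul_mem_right _ (hQP ▸ ha)
    · exact Q.mul_mem_left _ (Ideal.mem_sInf.mp hb ⟨hQ, hQP⟩)
  have hdab : δ (a * b) ∈ P := hradP (hrad _ hab)
  rw [Derivation.leibniz, smul_eq_mul, smul_eq_mul] at hdab
  have : b * δ a ∈ P := by
    have := P.sub_mem hdab (P.mul_mem_right (δ b) ha)
    simpa using this
  exact (hPprime.mem_or_mem this).resolve_left hbP
end
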